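/- Every graph obtained from a distance-hereditary graph G by adding a pendant vertex (a new vertex adjacent to exactly one vertex of G), a true twin of an existing vertex, or a false twin of an existing vertex, is distance hereditary. -/

import Mathlib

open SimpleGraph
namespace Stmt17Aux

variable {α β : Type}

lemma pseudo_walk {A : SimpleGraph α} {B : SimpleGraph β} {f : α → β}
    (hf : ∀ u v, A.Adj u v → f u = f v ∨ B.Adj (f u) (f v)) :
    ∀ {u v : α} (w : A.Walk u v), ∃ w' : B.Walk (f u) (f v), w'.length ≤ w.length := by
  intro u v w
  induction w with
  | nil => exact ⟨.nil, le_rfl⟩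
  | @cons u u' v h p ih =>
    obtain ⟨w', hw'⟩ := ih
    rcases hf _ _ h with he | ha
    · exact ⟨w'.copy he.symm rfl, by simpa using hw'.trans (Nat.le_succ _)⟩
    · exact ⟨.cons ha w', by simpa using Nat.succ_le_succ hw'⟩

lemma pseudo_reach {A : SimpleGraph α} {B : SimpleGraph β} {f : α → β}
    (hf : ∀ u v, A.Adj u v → f u = f v ∨ B.Adj (f u) (f v)) {u v}
    (h : A.Reachable u v) : B.Reachable (f u) (f v) := by
  obtain ⟨w⟩ := h; obtain ⟨w', _⟩ := pseudo_walk hf w; exact ⟨w'⟩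

lemma pseudo_dist {A : SimpleGraph α} {B : SimpleGraph β} {f : α → β}
    (hf : ∀ u v, A.Adj u v → f u = f v ∨ B.Adj (f u) (f v)) {u v}
    (h : A.Reachable u v) : B.dist (f u) (f v) ≤ A.dist u v := by
  obtain ⟨w, hw⟩ := h.exists_walk_length_eq_dist
  obtain ⟨w', hw'⟩ := pseudo_walk hf w
  exact (dist_le w').trans (hw ▸ hw')

lemma isolated_eq {A : SimpleGraph α} {ν u : α} (hiso : ∀ w, ¬ A.Adj ν w)
    (hr : A.Reachable ν u) : ν = u := by
  obtain ⟨w⟩ := hr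
  cases w with
  | nil => rfl
  | cons h p => exact absurd h (hiso _)

section Master

variable {U W : Type} {A : SimpleGraph U} {B : SimpleGraph W} {ν : U} {j : W → U} {x : W}

/-- retraction sending `ν` to `x` -/
noncomputable def mfun (j : W → U) (x : W) : U → W :=
  Function.extend j (fun a => a) (fun _ => x)

lemma mfun_j (hinj : Function.Injective j) (a : W) : mfun j x (j a) = a :=
  hinj.extend_apply _ _ _

lemma mfun_ν (hν : ∀ a, j a ≠ ν) : mfun j x ν = x := by
  have h : ¬ ∃ a, j a = ν := by rintro ⟨a, ha⟩; exact hν a ha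
  exact Function.extend_apply' _ _ _ h

lemma mfun_pseudo (hinj : Function.Injective j) (hν : ∀ a, j a ≠ ν)
    (hcov : ∀ u, u = ν ∨ ∃ a, j a = u)
    (hs : ∀ a b, A.Adj (j a) (j b) ↔ B.Adj a b)
    (HA : ∀ a, A.Adj ν (j a) → B.Adj x a ∨ a = x) :
    ∀ u v, A.Adj u v → mfun j x u = mfun j x v ∨ B.Adj (mfun j x u) (mfun j x v) := by
  intro u v huv
  rcases hcov u with rfl | ⟨a, rfl⟩
  · rcases hcov v with rfl | ⟨b, rfl⟩
    · exact absurd huv A.irrefl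
    · rcases HA b huv with hb | hb
      · exact Or.inr (by rw [mfun_ν hν, mfun_j hinj]; exact hb)
      · exact Or.inl (by rw [mfun_ν hν, mfun_j hinj, hb])
  · rcases hcov v with rfl | ⟨b, rfl⟩
    · rcases HA a huv.symm with ha | ha
      · exact Or.inr (by rw [mfun_ν hν, mfun_j hinj]; exact ha.symm)
      · exact Or.inl (by rw [mfun_ν hν, mfun_j hinj, ha])
    · exact Or.inr (by rw [mfun_j hinj, mfun_j hinj]; exact (hs a b).mp huv)

/-- the inclusion as a hom -/
def mhom (j : W → U) (hs : ∀ a b, A.Adj (j a) (j b) ↔ B.Adj a b) : B →g A :=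
  ⟨j, fun h => (hs _ _).mpr h⟩

@[simp] lemma mhom_apply (hs : ∀ a b, A.Adj (j a) (j b) ↔ B.Adj a b) (a : W) :
    mhom j hs a = j a := rfl

lemma M1 (hinj : Function.Injective j) (hν : ∀ a, j a ≠ ν)
    (hcov : ∀ u, u = ν ∨ ∃ a, j a = u)
    (hs : ∀ a b, A.Adj (j a) (j b) ↔ B.Adj a b)
    (HA : ∀ a, A.Adj ν (j a) → B.Adj x a ∨ a = x)
    {a b : W} (hr : A.Reachable (j a) (j b)) :
    A.dist (j a) (j b) = B.dist a b := by
  have hps := mfun_pseudo (x := x) hinj hν hcov hs HA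
  refine le_antisymm ?_ ?_
  · have hrB : B.Reachable a b := by
      have := pseudo_reach hps hr
      rwa [mfun_j hinj, mfun_j hinj] at this
    obtain ⟨w, hw⟩ := hrB.exists_walk_length_eq_dist
    have := dist_le (w.map (mhom j hs))
    rwa [Walk.length_map, hw] at this
  · have := pseudo_dist hps hr
    rwa [mfun_j hinj, mfun_j hinj] at this

lemma M2p (hinj : Function.Injective j) (hν : ∀ a, j a ≠ ν)
    (hcov : ∀ u, u = ν ∨ ∃ a, j a = u)
    (hs : ∀ a b, A.Adj (j a) (j b) ↔ B.Adj a b)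
    (HP : ∀ a, A.Adj ν (j a) ↔ a = x)
    {b : W} (hr : A.Reachable ν (j b)) :
    A.dist ν (j b) = B.dist x b + 1 := by
  have HA : ∀ a, A.Adj ν (j a) → B.Adj x a ∨ a = x := fun a ha => Or.inr ((HP a).mp ha)
  have hps := mfun_pseudo (x := x) hinj hν hcov hs HA
  refine le_antisymm ?_ ?_
  · have hrB : B.Reachable x b := by
      have := pseudo_reach hps hr
      rwa [mfun_ν hν, mfun_j hinj] at this
    obtain ⟨w, hw⟩ := hrB.exists_walk_length_eq_dist
    have hd := dist_le (Walk.cons ((HP x).mpr rfl) (w.map (mhom j hs)))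
    have hl := Walk.length_map (mhom j hs) w
    have hd' : A.dist ν (j b) ≤ (w.map (mhom j hs)).length + 1 := hd
    omega
  · obtain ⟨w, hw⟩ := hr.exists_walk_length_eq_dist
    have hne : ν ≠ j b := fun he => hν b he.symm
    obtain ⟨u, hadj, p, rfl⟩ := Walk.exists_eq_cons_of_ne hne w
    rcases hcov u with rfl | ⟨c, rfl⟩
    · exact absurd hadj A.irrefl
    · have hcx : c = x := (HP c).mp hadj
      subst hcx
      obtain ⟨w', hw'⟩ := pseudo_walk hps p
      have hle := (dist_le w').trans hw'
      rw [mfun_j hinj, mfun_j hinj] at hle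
      simp only [Walk.length_cons] at hw
      omega

lemma M2t (hinj : Function.Injective j) (hν : ∀ a, j a ≠ ν)
    (hcov : ∀ u, u = ν ∨ ∃ a, j a = u)
    (hs : ∀ a b, A.Adj (j a) (j b) ↔ B.Adj a b)
    (HA : ∀ a, A.Adj ν (j a) → B.Adj x a ∨ a = x)
    (HT : ∀ a, B.Adj x a → A.Adj ν (j a))
    {b : W} (hb : b ≠ x) (hr : A.Reachable ν (j b)) :
    A.dist ν (j b) = B.dist x b := by
  have hps := mfun_pseudo (x := x) hinj hν hcov hs HA
  refine le_antisymm ?_ ?_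
  · have hrB : B.Reachable x b := by
      have := pseudo_reach hps hr
      rwa [mfun_ν hν, mfun_j hinj] at this
    obtain ⟨w, hw⟩ := hrB.exists_walk_length_eq_dist
    obtain ⟨c, hxc, p, rfl⟩ := Walk.exists_eq_cons_of_ne (Ne.symm hb) w
    have hd := dist_le (Walk.cons (HT c hxc) (p.map (mhom j hs)))
    have hl := Walk.length_map (mhom j hs) p
    have hd' : A.dist ν (j b) ≤ (p.map (mhom j hs)).length + 1 := hd
    simp only [Walk.length_cons, Walk.length_map, mhom_apply] at hd hw
    omega
  · have := pseudo_dist hps hr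
    rwa [mfun_ν hν, mfun_j hinj] at this

lemma M2f (hinj : Function.Injective j) (hν : ∀ a, j a ≠ ν)
    (hcov : ∀ u, u = ν ∨ ∃ a, j a = u)
    (hs : ∀ a b, A.Adj (j a) (j b) ↔ B.Adj a b)
    (HA : ∀ a, A.Adj ν (j a) → B.Adj x a ∨ a = x)
    (hno : ¬ A.Adj ν (j x)) (hr : A.Reachable ν (j x)) :
    A.dist ν (j x) = 2 := by
  have hne : ν ≠ j x := fun he => hν x he.symm
  have hps := mfun_pseudo (x := x) hinj hν hcov hs HA
  refine le_antisymm ?_ ?_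
  · obtain ⟨w⟩ := hr
    obtain ⟨u, hadj, p, rfl⟩ := Walk.exists_eq_cons_of_ne hne w
    rcases hcov u with rfl | ⟨c, rfl⟩
    · exact absurd hadj A.irrefl
    · rcases HA c hadj with hxc | rfl
      · have hd := dist_le (Walk.cons hadj (Walk.cons ((hs c x).mpr hxc.symm) Walk.nil))
        simpa using hd
      · exact absurd hadj hno
  · have h0 : A.dist ν (j x) ≠ 0 := fun h => hne (hr.dist_eq_zero_iff.mp h)
    have h1 : A.dist ν (j x) ≠ 1 := fun h => hno (dist_eq_one_iff_adj.mp h)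
    omega

end Master

section Chain

variable {α β : Type}

lemma dist_eq_of_maps {A : SimpleGraph α} {B : SimpleGraph β} {p : α → β} {q : β → α}
    (hp : ∀ u v, A.Adj u v → p u = p v ∨ B.Adj (p u) (p v))
    (hq : ∀ u v, B.Adj u v → q u = q v ∨ A.Adj (q u) (q v))
    (hqp : ∀ u, q (p u) = u) {u v : α} (hr : A.Reachable u v) :
    A.dist u v = B.dist (p u) (p v) := by
  refine le_antisymm ?_ (pseudo_dist hp hr)
  have hrB := pseudo_reach hp hr
  have := pseudo_dist hq hrB
  rwa [hqp, hqp] at this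

lemma conn_transfer {A : SimpleGraph α} {B : SimpleGraph β} {p : α → β} {q : β → α}
    (hp : ∀ u v, A.Adj u v → p u = p v ∨ B.Adj (p u) (p v))
    (hpq : ∀ b, p (q b) = b) (hA : A.Connected) : B.Connected := by
  have hne : Nonempty α := hA.nonempty
  haveI : Nonempty β := ⟨p (Classical.arbitrary α)⟩
  refine SimpleGraph.Connected.mk (fun b b' => ?_)
  have := pseudo_reach hp (hA.preconnected (q b) (q b'))
  rwa [hpq, hpq] at this

end Chain

open Classical in
noncomputable def qmap {V : Type} (s : Set (Option V)) (hnone : none ∈ s) (t : Set V) :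
    ↥t → ↥s :=
  fun a => if h : some (a : V) ∈ s then ⟨some (a : V), h⟩ else ⟨none, hnone⟩

lemma qmap_pos {V : Type} {s : Set (Option V)} (hnone : none ∈ s) {t : Set V}
    (a : ↥t) (h : some (a : V) ∈ s) : qmap s hnone t a = ⟨some (a : V), h⟩ := dif_pos h

lemma qmap_neg {V : Type} {s : Set (Option V)} (hnone : none ∈ s) {t : Set V}
    (a : ↥t) (h : some (a : V) ∉ s) : qmap s hnone t a = ⟨none, hnone⟩ := dif_neg h

def pmap {V : Type} (s : Set (Option V)) (x : V) (t : Set V)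
    (hx : x ∈ t) (hsub : ∀ a : V, some a ∈ s → a ∈ t) : ↥s → ↥t :=
  fun u => match u with
  | ⟨none, _⟩ => ⟨x, hx⟩
  | ⟨some a, ha⟩ => ⟨a, hsub a ha⟩

@[simp] lemma pmap_none {V : Type} {s : Set (Option V)} {x : V} {t : Set V}
    {hx : x ∈ t} {hsub : ∀ a : V, some a ∈ s → a ∈ t} (hn : (none : Option V) ∈ s) :
    pmap s x t hx hsub ⟨none, hn⟩ = ⟨x, hx⟩ := rfl

@[simp] lemma pmap_some {V : Type} {s : Set (Option V)} {x : V} {t : Set V}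
    {hx : x ∈ t} {hsub : ∀ a : V, some a ∈ s → a ∈ t} {a : V} (ha : some a ∈ s) :
    pmap s x t hx hsub ⟨some a, ha⟩ = ⟨a, hsub a ha⟩ := rfl

end Stmt17Aux

/-- A graph is distance hereditary if every connected induced subgraph preserves the
distances of the original graph. -/
def IsDistHereditary {V : Type} (G : SimpleGraph V) : Prop :=
  ∀ s : Set V, (SimpleGraph.induce s G).Connected →
    ∀ x y : s, (SimpleGraph.induce s G).dist x y = G.dist ↑x ↑y

namespace Stmt17Aux

def q3 {V : Type} (s : Set (Option V)) : ↥{a : V | some a ∈ s} → ↥s :=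
  fun a => ⟨some a.1, a.2⟩

def p3 {V : Type} {s : Set (Option V)} (hnone : (none : Option V) ∉ s) :
    ↥s → ↥{a : V | some a ∈ s} :=
  fun u => match u with
  | ⟨none, h⟩ => absurd h hnone
  | ⟨some a, ha⟩ => ⟨a, ha⟩

lemma C2twin {V : Type} {G : SimpleGraph V} (hDH : IsDistHereditary G)
    {G' : SimpleGraph (Option V)}
    (hsame : ∀ a b : V, G'.Adj (some a) (some b) ↔ G.Adj a b) {x : V}
    (HAg : ∀ a, G'.Adj none (some a) → G.Adj x a ∨ a = x)
    (HTg : ∀ a, G.Adj x a → G'.Adj none (some a))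
    {s : Set (Option V)} (hconn : (SimpleGraph.induce s G').Connected)
    (hnone : none ∈ s) (hxs : some x ∉ s) (x0 y0 : ↥s) :
    (SimpleGraph.induce s G').dist x0 y0 = G'.dist ↑x0 ↑y0 := by
  classical
  have hinj_g : Function.Injective (Option.some : V → Option V) := Option.some_injective V
  have hν_g : ∀ a : V, some a ≠ (none : Option V) := fun a => Option.some_ne_none a
  have hcov_g : ∀ u : Option V, u = none ∨ ∃ a, some a = u := by
    intro u
    cases u with
    | none => exact Or.inl rfl
    | some a => exact Or.inr ⟨a, rfl⟩
  have hrAi : (induce s G').Reachable x0 y0 := hconn.preconnected x0 y0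
  have hval : ∀ u v : ↥s, (induce s G').Adj u v →
      Subtype.val u = Subtype.val v ∨ G'.Adj (Subtype.val u) (Subtype.val v) :=
    fun u v hv => Or.inr hv
  have hrg : G'.Reachable ↑x0 ↑y0 := pseudo_reach hval hrAi
  set t : Set V := insert x {a : V | some a ∈ s} with ht
  have hsub : ∀ a : V, some a ∈ s → a ∈ t := fun a ha => Set.mem_insert_of_mem _ ha
  have hxt : x ∈ t := Set.mem_insert x _
  have hqp : ∀ u, qmap s hnone t (pmap s x t hxt hsub u) = u := by
    rintro ⟨(_ | a), hu⟩
    · rw [pmap_none hu, qmap_neg hnone _ hxs]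
    · rw [pmap_some hu, qmap_pos hnone _ hu]
  have hpq : ∀ b, pmap s x t hxt hsub (qmap s hnone t b) = b := by
    intro b
    by_cases hb : some (b : V) ∈ s
    · rw [qmap_pos hnone b hb, pmap_some hb]
    · have hbx : (b : V) = x := (Set.mem_insert_iff.mp b.2).resolve_right hb
      rw [qmap_neg hnone b hb, pmap_none hnone]
      exact Subtype.ext hbx.symm
  have hp : ∀ u v : ↥s, (induce s G').Adj u v →
      pmap s x t hxt hsub u = pmap s x t hxt hsub v ∨
        (induce t G).Adj (pmap s x t hxt hsub u) (pmap s x t hxt hsub v) := by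
    rintro ⟨(_ | a), hu⟩ ⟨(_ | b), hv⟩ huv
    · exact absurd huv (SimpleGraph.irrefl _)
    · have huv' : G'.Adj none (some b) := huv
      rcases HAg b huv' with hab | rfl
      · exact Or.inr hab
      · exact absurd hv hxs
    · have huv' : G'.Adj (some a) none := huv
      rcases HAg a huv'.symm with hab | rfl
      · exact Or.inr hab.symm
      · exact absurd hu hxs
    · exact Or.inr ((hsame a b).mp huv)
  have hq : ∀ u v : ↥t, (induce t G).Adj u v →
      qmap s hnone t u = qmap s hnone t v ∨
        (induce s G').Adj (qmap s hnone t u) (qmap s hnone t v) := by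
    intro u v huv
    have huv' : G.Adj ↑u ↑v := huv
    by_cases h1 : some (u : V) ∈ s <;> by_cases h2 : some (v : V) ∈ s
    · rw [qmap_pos hnone u h1, qmap_pos hnone v h2]
      exact Or.inr ((hsame _ _).mpr huv')
    · have hvx : (v : V) = x := (Set.mem_insert_iff.mp v.2).resolve_right h2
      rw [qmap_pos hnone u h1, qmap_neg hnone v h2]
      refine Or.inr ?_
      have hxu : G.Adj x ↑u := by rw [← hvx]; exact huv'.symm
      exact (HTg _ hxu).symm
    · have hux : (u : V) = x := (Set.mem_insert_iff.mp u.2).resolve_right h1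
      rw [qmap_neg hnone u h1, qmap_pos hnone v h2]
      refine Or.inr ?_
      have hxv : G.Adj x ↑v := by rw [← hux]; exact huv'
      exact HTg _ hxv
    · have hux : (u : V) = x := (Set.mem_insert_iff.mp u.2).resolve_right h1
      have hvx : (v : V) = x := (Set.mem_insert_iff.mp v.2).resolve_right h2
      rw [hux, hvx] at huv'
      exact absurd huv' (G.irrefl)
  have hBconn : (induce t G).Connected := conn_transfer hp hpq hconn
  have hd1 : (induce s G').dist x0 y0 =
      (induce t G).dist (pmap s x t hxt hsub x0) (pmap s x t hxt hsub y0) :=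
    dist_eq_of_maps hp hq hqp hrAi
  have hd2 := hDH t hBconn (pmap s x t hxt hsub x0) (pmap s x t hxt hsub y0)
  have hd3 : G'.dist ↑x0 ↑y0 =
      G.dist ↑(pmap s x t hxt hsub x0) ↑(pmap s x t hxt hsub y0) := by
    rcases x0 with ⟨(_ | a), hx0⟩ <;> rcases y0 with ⟨(_ | b), hy0⟩
    · show G'.dist none none = G.dist x x
      rw [SimpleGraph.dist_self, SimpleGraph.dist_self]
    · show G'.dist none (some b) = G.dist x b
      have hbx : b ≠ x := fun he => hxs (he ▸ hy0)
      exact M2t hinj_g hν_g hcov_g hsame HAg HTg hbx hrg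
    · show G'.dist (some a) none = G.dist a x
      have hax : a ≠ x := fun he => hxs (he ▸ hx0)
      have := M2t hinj_g hν_g hcov_g hsame HAg HTg hax hrg.symm
      rw [SimpleGraph.dist_comm (G := G'), SimpleGraph.dist_comm (G := G)]
      exact this
    · show G'.dist (some a) (some b) = G.dist a b
      exact M1 hinj_g hν_g hcov_g hsame HAg hrg
  rw [hd1, hd2, hd3]

theorem key {V : Type} (G : SimpleGraph V) (hDH : IsDistHereditary G)
    (G' : SimpleGraph (Option V))
    (hsame : ∀ a b : V, G'.Adj (some a) (some b) ↔ G.Adj a b)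
    (x : V)
    (h : (∀ a : V, G'.Adj none (some a) ↔ a = x) ∨
         (∀ a : V, G'.Adj none (some a) ↔ (G.Adj x a ∨ a = x)) ∨
         (∀ a : V, G'.Adj none (some a) ↔ G.Adj x a)) :
    IsDistHereditary G' := by
  classical
  have HAg : ∀ a, G'.Adj none (some a) → G.Adj x a ∨ a = x := by
    rcases h with hp | ht | hf
    · exact fun a ha => Or.inr ((hp a).mp ha)
    · exact fun a ha => (ht a).mp ha
    · exact fun a ha => Or.inl ((hf a).mp ha)
  have hinj_g : Function.Injective (Option.some : V → Option V) := Option.some_injective V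
  have hν_g : ∀ a : V, some a ≠ (none : Option V) := fun a => Option.some_ne_none a
  have hcov_g : ∀ u : Option V, u = none ∨ ∃ a, some a = u := by
    intro u
    cases u with
    | none => exact Or.inl rfl
    | some a => exact Or.inr ⟨a, rfl⟩
  intro s hconn x0 y0
  have hrAi : (induce s G').Reachable x0 y0 := hconn.preconnected x0 y0
  have hval : ∀ u v : ↥s, (induce s G').Adj u v →
      Subtype.val u = Subtype.val v ∨ G'.Adj (Subtype.val u) (Subtype.val v) :=
    fun u v hv => Or.inr hv
  have hrg : G'.Reachable ↑x0 ↑y0 := pseudo_reach hval hrAi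
  by_cases hnone : none ∈ s
  · by_cases hxs : some x ∈ s
    · -- C1 : both the new vertex and the twin/attachment vertex are in s
      have hinj : Function.Injective (q3 s) := by
        intro a b hab
        exact Subtype.ext (Option.some_injective V (congrArg Subtype.val hab))
      have hν : ∀ a, q3 s a ≠ (⟨none, hnone⟩ : ↥s) := by
        intro a hab
        exact Option.some_ne_none a.1 (congrArg Subtype.val hab)
      have hcov : ∀ u : ↥s, u = ⟨none, hnone⟩ ∨ ∃ a, q3 s a = u := by
        rintro ⟨(_ | a), hu⟩
        · exact Or.inl rfl
        · exact Or.inr ⟨⟨a, hu⟩, rfl⟩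
      have hsi : ∀ a b, (induce s G').Adj (q3 s a) (q3 s b) ↔
          (induce {a : V | some a ∈ s} G).Adj a b :=
        fun a b => hsame a.1 b.1
      have HAi : ∀ a, (induce s G').Adj ⟨none, hnone⟩ (q3 s a) →
          (induce {a : V | some a ∈ s} G).Adj ⟨x, hxs⟩ a ∨ a = ⟨x, hxs⟩ := by
        intro a ha
        exact (HAg a.1 ha).imp (fun hh => hh) (fun hh => Subtype.ext hh)
      have hBconn : (induce {a : V | some a ∈ s} G).Connected := by
        have hps := mfun_pseudo (x := (⟨x, hxs⟩ : ↥{a : V | some a ∈ s}))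
          hinj hν hcov hsi HAi
        haveI : Nonempty ↥{a : V | some a ∈ s} := ⟨⟨x, hxs⟩⟩
        refine SimpleGraph.Connected.mk (fun a b => ?_)
        have := pseudo_reach hps (hconn.preconnected (q3 s a) (q3 s b))
        rwa [mfun_j hinj, mfun_j hinj] at this
      have hBd := hDH _ hBconn
      have core : ∀ b : ↥{a : V | some a ∈ s},
          (induce s G').dist ⟨none, hnone⟩ (q3 s b) = G'.dist none (some b.1) := by
        intro b
        have hrA : (induce s G').Reachable ⟨none, hnone⟩ (q3 s b) := hconn.preconnected _ _
        have hrg2 : G'.Reachable none (some b.1) := pseudo_reach hval hrA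
        rcases h with hp' | ht' | hf'
        · -- pendant
          have HPi : ∀ a, (induce s G').Adj ⟨none, hnone⟩ (q3 s a) ↔
              a = (⟨x, hxs⟩ : ↥{a : V | some a ∈ s}) := by
            intro a
            exact (hp' a.1).trans ⟨fun hh => Subtype.ext hh, fun hh => congrArg Subtype.val hh⟩
          rw [M2p hinj hν hcov hsi HPi hrA, M2p hinj_g hν_g hcov_g hsame hp' hrg2,
            hBd ⟨x, hxs⟩ b]
        · -- true twin
          by_cases hbx : b = (⟨x, hxs⟩ : ↥{a : V | some a ∈ s})
          · subst hbx
            have h1 : (induce s G').Adj ⟨none, hnone⟩ (q3 s ⟨x, hxs⟩) :=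
              (ht' x).mpr (Or.inr rfl)
            have h2 : G'.Adj none (some x) := (ht' x).mpr (Or.inr rfl)
            rw [dist_eq_one_iff_adj.mpr h1, dist_eq_one_iff_adj.mpr h2]
          · have HTi : ∀ a, (induce {a : V | some a ∈ s} G).Adj ⟨x, hxs⟩ a →
                (induce s G').Adj ⟨none, hnone⟩ (q3 s a) :=
              fun a ha => (ht' a.1).mpr (Or.inl ha)
            have hbx' : b.1 ≠ x := fun he => hbx (Subtype.ext he)
            rw [M2t hinj hν hcov hsi HAi HTi hbx hrA,
              M2t hinj_g hν_g hcov_g hsame HAg (fun a ha => (ht' a).mpr (Or.inl ha)) hbx' hrg2,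
              hBd ⟨x, hxs⟩ b]
        · -- false twin
          by_cases hbx : b = (⟨x, hxs⟩ : ↥{a : V | some a ∈ s})
          · subst hbx
            have hnoi : ¬ (induce s G').Adj ⟨none, hnone⟩ (q3 s ⟨x, hxs⟩) :=
              fun ha => G.irrefl ((hf' x).mp ha)
            have hnog : ¬ G'.Adj none (some x) := fun ha => G.irrefl ((hf' x).mp ha)
            rw [M2f hinj hν hcov hsi HAi hnoi hrA,
              M2f hinj_g hν_g hcov_g hsame HAg hnog hrg2]
          · have HTi : ∀ a, (induce {a : V | some a ∈ s} G).Adj ⟨x, hxs⟩ a →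
                (induce s G').Adj ⟨none, hnone⟩ (q3 s a) :=
              fun a ha => (hf' a.1).mpr ha
            have hbx' : b.1 ≠ x := fun he => hbx (Subtype.ext he)
            rw [M2t hinj hν hcov hsi HAi HTi hbx hrA,
              M2t hinj_g hν_g hcov_g hsame HAg (fun a ha => (hf' a).mpr ha) hbx' hrg2,
              hBd ⟨x, hxs⟩ b]
      rcases hcov x0 with rfl | ⟨a, rfl⟩ <;> rcases hcov y0 with rfl | ⟨b, rfl⟩
      · show (induce s G').dist _ _ = G'.dist none none
        rw [SimpleGraph.dist_self, SimpleGraph.dist_self]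
      · exact core b
      · rw [SimpleGraph.dist_comm (G := induce s G'), SimpleGraph.dist_comm (G := G')]
        exact core a
      · have h1 := M1 hinj hν hcov hsi HAi (hconn.preconnected (q3 s a) (q3 s b))
        have h2 : G'.dist (some a.1) (some b.1) = G.dist a.1 b.1 :=
          M1 hinj_g hν_g hcov_g hsame HAg hrg
        show (induce s G').dist (q3 s a) (q3 s b) = G'.dist (some a.1) (some b.1)
        rw [h1, h2, hBd a b]
    · -- C2 : new vertex in s, but some x not in s
      rcases h with hp' | ht' | hf'
      · -- pendant: none is isolated in the induced graph
        have hiso : ∀ u : ↥s, ¬ (induce s G').Adj (⟨none, hnone⟩ : ↥s) u := by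
          rintro ⟨(_ | a), hu⟩ hadj
          · exact SimpleGraph.irrefl _ hadj
          · have hadj' : G'.Adj none (some a) := hadj
            have hax : a = x := (hp' a).mp hadj'
            exact hxs (hax ▸ hu)
        have hx0 := isolated_eq hiso (hconn.preconnected _ x0)
        have hy0 := isolated_eq hiso (hconn.preconnected _ y0)
        rw [← hx0, ← hy0]
        show (induce s G').dist _ _ = G'.dist none none
        rw [SimpleGraph.dist_self, SimpleGraph.dist_self]
      · exact C2twin hDH hsame HAg (fun a ha => (ht' a).mpr (Or.inl ha)) hconn hnone hxs x0 y0
      · exact C2twin hDH hsame HAg (fun a ha => (hf' a).mpr ha) hconn hnone hxs x0 y0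
  · -- C3 : none not in s
    have hp : ∀ u v : ↥s, (induce s G').Adj u v →
        p3 hnone u = p3 hnone v ∨
          (induce {a : V | some a ∈ s} G).Adj (p3 hnone u) (p3 hnone v) := by
      rintro ⟨(_ | a), hu⟩ ⟨(_ | b), hv⟩ huv
      · exact absurd hu hnone
      · exact absurd hu hnone
      · exact absurd hv hnone
      · exact Or.inr ((hsame a b).mp huv)
    have hq : ∀ u v, (induce {a : V | some a ∈ s} G).Adj u v →
        q3 s u = q3 s v ∨ (induce s G').Adj (q3 s u) (q3 s v) :=
      fun u v huv => Or.inr ((hsame u.1 v.1).mpr huv)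
    have hqp : ∀ u, q3 s (p3 hnone u) = u := by
      rintro ⟨(_ | a), hu⟩
      · exact absurd hu hnone
      · rfl
    have hpq : ∀ b, p3 hnone (q3 s b) = b := fun b => rfl
    have hBconn := conn_transfer hp hpq hconn
    have hd1 := dist_eq_of_maps hp hq hqp hrAi
    have hd2 := hDH _ hBconn (p3 hnone x0) (p3 hnone y0)
    have hd3 : G'.dist ↑x0 ↑y0 = G.dist ↑(p3 hnone x0) ↑(p3 hnone y0) := by
      rcases x0 with ⟨(_ | a), hx0⟩
      · exact absurd hx0 hnone
      rcases y0 with ⟨(_ | b), hy0⟩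
      · exact absurd hy0 hnone
      show G'.dist (some a) (some b) = G.dist a b
      exact M1 hinj_g hν_g hcov_g hsame HAg hrg
    rw [hd1, hd2, hd3]

end Stmt17Aux

/-- adding a pendant vertex, a true twin, or a false twin to a
distance-hereditary graph yields a distance-hereditary graph.  The new vertex is
`none : Option V`; `G'` agrees with `G` on `V`. -/
theorem stmt17 (V : Type) [Fintype V] (G : SimpleGraph V)
    (hDH : IsDistHereditary G) (G' : SimpleGraph (Option V))
    (hsame : ∀ a b : V, G'.Adj (some a) (some b) ↔ G.Adj a b)
    (h : (∃ x : V, ∀ a : V, G'.Adj none (some a) ↔ a = x) ∨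
         (∃ x : V, ∀ a : V, G'.Adj none (some a) ↔ (G.Adj x a ∨ a = x)) ∨
         (∃ x : V, ∀ a : V, G'.Adj none (some a) ↔ G.Adj x a)) :
    IsDistHereditary G' := by
  rcases h with ⟨x, hx⟩ | ⟨x, hx⟩ | ⟨x, hx⟩
  · exact Stmt17Aux.key G hDH G' hsame x (Or.inl hx)
  · exact Stmt17Aux.key G hDH G' hsame x (Or.inr (Or.inl hx))
  · exact Stmt17Aux.key G hDH G' hsame x (Or.inr (Or.inr hx))
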